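/- Let μ be a capacity on [m] and u = (u_1,...,u_m) ∈ [0,1]^m. Let σ be a permutation of [m] with u_{σ(1)} ≤ ... ≤ u_{σ(m)} and A_{σ(j)} = {σ(j),...,σ(m)}. Then the Sugeno integral equals the median of the 2m−1 values u_1,...,u_m, μ(A_{σ(2)}),...,μ(A_{σ(m)}); that is, S_μ(u) is the m-th smallest element of the multiset {u_1,...,u_m, μ(A_{σ(2)}),...,μ(A_{σ(m)})}. -/

import Mathlib

/-- The minimum of `u` over a finite subset `A` (with the convention that the
minimum over the empty set is `1`, the top of the unit interval). -/
noncomputable def setMin {m : ℕ} (u : Fin m → ℝ) (A : Finset (Fin m)) : ℝ :=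
  if h : A.Nonempty then A.inf' h u else 1

/-- The (discrete) Sugeno integral of `u : [m] → ℝ` with respect to the set
function `μ`, in disjunctive normal form:
`S_μ(u) = ⋁_{A ⊆ [m]} ((⋀_{j ∈ A} u j) ∧ μ A)`. -/
noncomputable def sugeno {m : ℕ} (μ : Finset (Fin m) → ℝ) (u : Fin m → ℝ) : ℝ :=
  (Finset.univ : Finset (Finset (Fin m))).sup' Finset.univ_nonempty
    (fun A => min (setMin u A) (μ A))

/-- A capacity on `[m]`: a monotone set function with `μ ∅ = 0` and `μ [m] = 1`. -/
def IsCapacity {m : ℕ} (μ : Finset (Fin m) → ℝ) : Prop :=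
  μ ∅ = 0 ∧ μ Finset.univ = 1 ∧
    ∀ A B : Finset (Fin m), A ⊆ B → μ A ≤ μ B

lemma sorted_le_aux {l : List ℝ} (hl : l.Pairwise (· ≤ ·)) {k : ℕ} (hk : k < l.length)
    {S : ℝ} (h1 : k + 1 ≤ l.countP (fun x => decide (x ≤ S))) : l[k] ≤ S := by
  by_contra hgt
  push_neg at hgt
  have h0 : (l.drop k).countP (fun x => decide (x ≤ S)) = 0 := by
    rw [List.countP_eq_zero]
    intro x hx
    simp only [decide_eq_true_eq, not_le]
    obtain ⟨i, hi, hxi⟩ := List.mem_iff_getElem.mp hx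
    have hlen : (List.drop k l).length = l.length - k := List.length_drop
    have hkl : k + i < l.length := by omega
    have hx' : x = l[k + i] := by rw [← hxi, List.getElem_drop' hkl]
    calc S < l[k] := hgt
      _ ≤ l[k + i] := hl.rel_get_of_le (a := ⟨k, hk⟩) (b := ⟨k + i, hkl⟩) (by simp)
      _ = x := hx'.symm
  have : l.countP (fun x => decide (x ≤ S)) ≤ k := by
    calc l.countP (fun x => decide (x ≤ S))
        = (l.take k).countP _ + (l.drop k).countP _ := by
          conv_lhs => rw [← List.take_append_drop k l]
          rw [List.countP_append]
      _ = (l.take k).countP _ := by rw [h0, Nat.add_zero]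
      _ ≤ (l.take k).length := List.countP_le_length
      _ ≤ k := by simp [List.length_take]
  omega

lemma sorted_ge_aux {l : List ℝ} (hl : l.Pairwise (· ≤ ·)) {k : ℕ} (hk : k < l.length)
    {S : ℝ} (h2 : l.length - k ≤ l.countP (fun x => decide (S ≤ x))) : S ≤ l[k] := by
  by_contra hlt
  push_neg at hlt
  have h0 : (l.take (k+1)).countP (fun x => decide (S ≤ x)) = 0 := by
    rw [List.countP_eq_zero]
    intro x hx
    simp only [decide_eq_true_eq, not_le]
    obtain ⟨i, hi, hxi⟩ := List.mem_iff_getElem.mp hx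
    have hlen : (List.take (k+1) l).length = min (k+1) l.length := List.length_take
    have hil : i < l.length := by omega
    have hx' : x = l[i] := by rw [← hxi, List.getElem_take]
    calc x = l[i] := hx'
      _ ≤ l[k] := hl.rel_get_of_le (a := ⟨i, hil⟩) (b := ⟨k, hk⟩) (by simp; omega)
      _ < S := hlt
  have : l.countP (fun x => decide (S ≤ x)) ≤ l.length - (k+1) := by
    calc l.countP (fun x => decide (S ≤ x))
        = (l.take (k+1)).countP _ + (l.drop (k+1)).countP _ := by
          conv_lhs => rw [← List.take_append_drop (k+1) l]
          rw [List.countP_append]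
      _ = (l.drop (k+1)).countP _ := by rw [h0, Nat.zero_add]
      _ ≤ (l.drop (k+1)).length := List.countP_le_length
      _ = l.length - (k+1) := List.length_drop
  omega

lemma sorted_getD_eq {l : List ℝ} (hl : l.Pairwise (· ≤ ·)) {k : ℕ} (hk : k < l.length)
    {S : ℝ} (h1 : k + 1 ≤ l.countP (fun x => decide (x ≤ S)))
    (h2 : l.length - k ≤ l.countP (fun x => decide (S ≤ x))) :
    l.getD k 0 = S := by
  rw [List.getD_eq_getElem l 0 hk]
  exact le_antisymm (sorted_le_aux hl hk h1) (sorted_ge_aux hl hk h2)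

/-- Median representation of the Sugeno integral: `S_μ(u)` is the `m`-th
smallest element of the multiset of `2m − 1` values
`{u_1, …, u_m, μ(A_{σ(2)}), …, μ(A_{σ(m)})}`, where `u_{σ(1)} ≤ … ≤ u_{σ(m)}`
and `A_{σ(j)} = {σ(j), …, σ(m)}`. -/
theorem sugeno_eq_median (m : ℕ) (hm : 0 < m)
    (μ : Finset (Fin m) → ℝ) (hμ : IsCapacity μ)
    (u : Fin m → ℝ) (hu : ∀ i, 0 ≤ u i ∧ u i ≤ 1)
    (σ : Equiv.Perm (Fin m))
    (hσ : ∀ i j : Fin m, i ≤ j → u (σ i) ≤ u (σ j))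
    (M : Multiset ℝ)
    (hM : M = (Finset.univ : Finset (Fin m)).val.map u +
      (((Finset.univ : Finset (Fin m)).val.filter (fun j : Fin m => (j : ℕ) ≠ 0)).map
        (fun j => μ ((Finset.Ici j).image σ)))) :
    sugeno μ u = (M.sort (· ≤ ·)).getD (m - 1) 0 := by
  classical
  haveI : NeZero m := ⟨hm.ne'⟩
  obtain ⟨hμ0, hμuniv, hμmono⟩ := hμ
  set v : Fin m → ℝ := fun j => u (σ j) with hv
  set a : Fin m → ℝ := fun j => μ ((Finset.Ici j).image σ) with ha
  have hFne : (Finset.univ : Finset (Fin m)).Nonempty := ⟨0, Finset.mem_univ _⟩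
  have hamono : ∀ i j : Fin m, i ≤ j → a j ≤ a i := fun i j hij =>
    hμmono _ _ (Finset.image_subset_image (Finset.Ici_subset_Ici.mpr hij))
  have ha0 : a 0 = 1 := by
    have h1 : (Finset.Ici (0 : Fin m)) = Finset.univ := by
      ext x; simp [Fin.zero_le]
    have h2 : (Finset.univ : Finset (Fin m)).image σ = Finset.univ := by
      ext x
      simp only [Finset.mem_image, Finset.mem_univ, true_and, iff_true]
      exact ⟨σ.symm x, by simp⟩
    rw [ha]
    simp only [h1, h2, hμuniv]
  have hμ_nonneg : ∀ A, 0 ≤ μ A := fun A => hμ0 ▸ hμmono ∅ A (Finset.empty_subset A)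
  have hsetMin : ∀ j : Fin m, setMin u ((Finset.Ici j).image σ) = v j := by
    intro j
    have hne : ((Finset.Ici j).image σ).Nonempty :=
      ⟨σ j, Finset.mem_image_of_mem _ (Finset.mem_Ici.mpr le_rfl)⟩
    rw [setMin, dif_pos hne, Finset.inf'_image]
    refine le_antisymm (Finset.inf'_le _ (Finset.mem_Ici.mpr le_rfl))
      (Finset.le_inf' _ _ fun i hi => hσ j i (Finset.mem_Ici.mp hi))
  set S := Finset.univ.sup' hFne (fun j : Fin m => min (v j) (a j)) with hSdef
  have hjmin : ∀ j : Fin m, min (v j) (a j) ≤ S := fun j =>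
    Finset.le_sup' (f := fun j : Fin m => min (v j) (a j)) (Finset.mem_univ j)
  have hSeq : sugeno μ u = S := by
    apply le_antisymm
    · apply Finset.sup'_le
      intro A _
      rcases A.eq_empty_or_nonempty with rfl | hA
      · have h1 : min (setMin u ∅) (μ ∅) ≤ 0 := by rw [hμ0]; exact min_le_right _ _
        refine le_trans h1 (le_trans (le_min (hu (σ 0)).1 (hμ_nonneg _)) (hjmin 0))
      · set j := (A.image (σ.symm : Fin m → Fin m)).min' (hA.image _) with hj
        have hjmem : σ j ∈ A := by
          have h1 := Finset.min'_mem (A.image (σ.symm : Fin m → Fin m)) (hA.image _)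
          obtain ⟨x, hxA, hxj⟩ := Finset.mem_image.mp h1
          rwa [show σ j = x by rw [hj, ← hxj]; simp]
        have h1 : setMin u A ≤ v j := by
          rw [setMin, dif_pos hA]; exact Finset.inf'_le _ hjmem
        have h2 : μ A ≤ a j := by
          apply hμmono
          intro x hx
          exact Finset.mem_image.mpr ⟨σ.symm x,
            Finset.mem_Ici.mpr (Finset.min'_le _ _ (Finset.mem_image_of_mem _ hx)), by simp⟩
        exact le_trans (min_le_min h1 h2) (hjmin j)
    · apply Finset.sup'_le
      intro j _
      have h := Finset.le_sup' (f := fun A => min (setMin u A) (μ A))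
        (Finset.mem_univ ((Finset.Ici j).image σ))
      rw [hsetMin j] at h
      exact h
  -- The maximal index with v j ≤ a j
  set T := Finset.univ.filter (fun j : Fin m => v j ≤ a j) with hT
  have hTne : T.Nonempty := by
    refine ⟨0, ?_⟩
    rw [hT, Finset.mem_filter]
    exact ⟨Finset.mem_univ _, ha0 ▸ (hu (σ 0)).2⟩
  set js := T.max' hTne with hjs
  have hjsT : v js ≤ a js := (Finset.mem_filter.mp (T.max'_mem hTne)).2
  have hjsmax : ∀ j : Fin m, v j ≤ a j → j ≤ js := fun j hj =>
    Finset.le_max' T j (by rw [hT, Finset.mem_filter]; exact ⟨Finset.mem_univ _, hj⟩)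
  have hvS : v js ≤ S := le_trans (le_min le_rfl hjsT) (hjmin js)
  -- Counting
  have hcount : ∀ (p : ℝ → Prop) [DecidablePred p],
      M.countP p = (Finset.univ.filter fun j : Fin m => p (v j)).card
        + (Finset.univ.filter fun j : Fin m => p (a j) ∧ (j : ℕ) ≠ 0).card := by
    intro p _
    rw [hM, Multiset.countP_add, Multiset.countP_map, Multiset.countP_map,
      Multiset.filter_filter]
    congr 1
    · rw [show Multiset.card (Multiset.filter (fun i => p (u i)) (Finset.univ : Finset (Fin m)).val)
          = (Finset.univ.filter fun i : Fin m => p (u i)).card by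
        rw [Finset.card, Finset.filter_val]]
      refine Finset.card_bij' (fun i _ => σ.symm i) (fun j _ => σ j) ?_ ?_ ?_ ?_ <;>
        intro x hx <;> simp only [Finset.mem_filter, Finset.mem_univ, true_and] at hx ⊢ <;>
        simp [hv] at hx ⊢ <;> simp [hx]
  have hA1 : m ≤ M.countP (fun x => x ≤ S) := by
    rw [hcount]
    have s1 : Finset.Iic js ⊆ Finset.univ.filter fun j : Fin m => v j ≤ S := by
      intro j hj
      simp only [Finset.mem_filter, Finset.mem_univ, true_and]
      exact le_trans (hσ j js (Finset.mem_Iic.mp hj)) hvS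
    have s2 : Finset.Ioi js ⊆ Finset.univ.filter fun j : Fin m => a j ≤ S ∧ (j : ℕ) ≠ 0 := by
      intro j hj
      rw [Finset.mem_Ioi] at hj
      simp only [Finset.mem_filter, Finset.mem_univ, true_and]
      constructor
      · have hja : a j < v j := by
          by_contra hja
          push_neg at hja
          exact absurd (hjsmax j hja) (not_le.mpr hj)
        calc a j = min (v j) (a j) := (min_eq_right hja.le).symm
          _ ≤ S := hjmin j
      · have h : (js : ℕ) < (j : ℕ) := hj
        omega
    have c1 := Finset.card_le_card s1
    have c2 := Finset.card_le_card s2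
    rw [Fin.card_Iic] at c1
    rw [Fin.card_Ioi] at c2
    have := js.isLt
    omega
  have hB1 : m ≤ M.countP (fun x => S ≤ x) := by
    obtain ⟨j0, _, hj0⟩ := Finset.exists_mem_eq_sup' hFne (fun j : Fin m => min (v j) (a j))
    rw [hcount]
    have s1 : Finset.Ici j0 ⊆ Finset.univ.filter fun j : Fin m => S ≤ v j := by
      intro j hj
      simp only [Finset.mem_filter, Finset.mem_univ, true_and]
      calc S = min (v j0) (a j0) := hj0
        _ ≤ v j0 := min_le_left _ _
        _ ≤ v j := hσ j0 j (Finset.mem_Ici.mp hj)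
    have s2 : Finset.Ioc 0 j0 ⊆ Finset.univ.filter fun j : Fin m => S ≤ a j ∧ (j : ℕ) ≠ 0 := by
      intro j hj
      rw [Finset.mem_Ioc] at hj
      simp only [Finset.mem_filter, Finset.mem_univ, true_and]
      constructor
      · calc S = min (v j0) (a j0) := hj0
          _ ≤ a j0 := min_le_right _ _
          _ ≤ a j := hamono j j0 hj.2
      · have h : ((0 : Fin m) : ℕ) < (j : ℕ) := hj.1
        simp only [Fin.val_zero] at h
        omega
    have c1 := Finset.card_le_card s1
    have c2 := Finset.card_le_card s2
    rw [Fin.card_Ici] at c1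
    rw [Fin.card_Ioc] at c2
    have := j0.isLt
    simp only [Fin.val_zero] at c2
    omega
  have hfiltercard :
      ((Finset.univ : Finset (Fin m)).filter fun j : Fin m => (j : ℕ) ≠ 0).card = m - 1 := by
    have h : ((Finset.univ : Finset (Fin m)).filter fun j : Fin m => (j : ℕ) ≠ 0)
        = Finset.univ.erase 0 := by
      ext j; simp only [Finset.mem_filter, Finset.mem_univ, true_and, Finset.mem_erase, and_true, ne_eq, Fin.ext_iff, Fin.val_zero]
    rw [h, Finset.card_erase_of_mem (Finset.mem_univ _), Finset.card_univ, Fintype.card_fin]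
  have hcard : Multiset.card M = 2 * m - 1 := by
    rw [hM, Multiset.card_add, Multiset.card_map, Multiset.card_map, ← Finset.filter_val,
      ← Finset.card, ← Finset.card, hfiltercard, Finset.card_univ, Fintype.card_fin]
    omega
  have hlen : (M.sort (· ≤ ·)).length = 2 * m - 1 := by
    rw [Multiset.length_sort, hcard]
  have hk : m - 1 < (M.sort (· ≤ ·)).length := by rw [hlen]; omega
  have hconv1 : List.countP (fun x => decide (x ≤ S)) (M.sort (· ≤ ·))
      = M.countP (fun x => x ≤ S) := by
    rw [← Multiset.coe_countP, Multiset.sort_eq]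
  have hconv2 : List.countP (fun x => decide (S ≤ x)) (M.sort (· ≤ ·))
      = M.countP (fun x => S ≤ x) := by
    rw [← Multiset.coe_countP, Multiset.sort_eq]
  rw [hSeq]
  refine (sorted_getD_eq (Multiset.pairwise_sort _ _) hk ?_ ?_).symm
  · rw [hconv1]; omega
  · rw [hconv2, hlen]; omega
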